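/- Let H be a real Hilbert space, E : H → ℝ Fréchet differentiable, and ξ : [0,∞) → H differentiable with ξ'(t) = −∇E(ξ(t)) for all t ≥ 0. Let γ∞ ∈ H, Z > 0, δ ∈ (0,1], θ ∈ [1/2,1), and suppose ‖∇E(η)‖ ≥ Z|E(η) − E(γ∞)|^θ for all η with ‖η − γ∞‖ < δ. If t ≥ 0 satisfies ‖ξ(t) − γ∞‖ < δ and E(ξ(t)) > E(γ∞), then the function r ↦ (E(ξ(r)) − E(γ∞))^{1−θ} is differentiable at t with derivative −(1−θ)(E(ξ(t)) − E(γ∞))^{−θ} ‖∇E(ξ(t))‖², and in particular its derivative at t is ≤ −(1−θ) Z ‖∇E(ξ(t))‖. -/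

import Mathlib

/-- Pointwise differential inequality for
`H(r) = (E(ξ(r)) − E(γ∞))^{1−θ}` along the gradient flow: at a time `t` where the
Łojasiewicz–Simon inequality applies, `H` has derivative
`−(1−θ)(E(ξ(t))−E(γ∞))^{−θ}‖∇E(ξ(t))‖²`, which is `≤ −(1−θ)Z‖∇E(ξ(t))‖`. -/
theorem stmt11 {H : Type*} [NormedAddCommGroup H] [InnerProductSpace ℝ H]
    [CompleteSpace H]
    (E : H → ℝ) (hE : Differentiable ℝ E)
    (ξ : ℝ → H) (hξ : ∀ t : ℝ, 0 ≤ t → HasDerivAt ξ (-(gradient E (ξ t))) t)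
    (γlim : H) (Z δ θ : ℝ) (hZ : 0 < Z) (hδ : δ ∈ Set.Ioc (0:ℝ) 1)
    (hθ : θ ∈ Set.Ico (1/2 : ℝ) 1)
    (hLS : ∀ η : H, ‖η - γlim‖ < δ → Z * |E η - E γlim| ^ θ ≤ ‖gradient E η‖)
    (t : ℝ) (ht : 0 ≤ t) (hclose : ‖ξ t - γlim‖ < δ) (hpos : E γlim < E (ξ t)) :
    HasDerivAt (fun r : ℝ => (E (ξ r) - E γlim) ^ (1 - θ))
        (-((1 - θ) * (E (ξ t) - E γlim) ^ (-θ) * ‖gradient E (ξ t)‖ ^ 2)) t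
    ∧ -((1 - θ) * (E (ξ t) - E γlim) ^ (-θ) * ‖gradient E (ξ t)‖ ^ 2)
        ≤ -((1 - θ) * Z * ‖gradient E (ξ t)‖) := by
  set g := gradient E (ξ t) with hg
  set a := E (ξ t) - E γlim with ha
  have hapos : 0 < a := by simp [ha, hpos]
  have hθ1 : 0 < 1 - θ := by linarith [hθ.2]
  -- derivative of r ↦ E (ξ r) - E γlim at t
  have hgrad : HasGradientAt E g (ξ t) := (hE (ξ t)).hasGradientAt
  have hcomp : HasDerivAt (fun r => E (ξ r)) (-‖g‖ ^ 2) t := by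
    have := hgrad.hasFDerivAt.comp_hasDerivAt t (hξ t ht)
    refine this.congr_deriv ?_
    simp [hgrad.hasFDerivAt.fderiv, InnerProductSpace.toDual_apply_apply, real_inner_smul_right, real_inner_self_eq_norm_sq]
  have hf : HasDerivAt (fun r => E (ξ r) - E γlim) (-‖g‖ ^ 2) t := hcomp.sub_const _
  have hd : HasDerivAt (fun r : ℝ => (E (ξ r) - E γlim) ^ (1 - θ))
      (-((1 - θ) * a ^ (-θ) * ‖g‖ ^ 2)) t := by
    have := hf.rpow_const (p := 1 - θ) (Or.inl hapos.ne')
    convert this using 1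
    rw [show (1 - θ) - 1 = -θ by ring]
    ring
  refine ⟨hd, ?_⟩
  -- inequality
  have hLS' := hLS (ξ t) hclose
  rw [abs_of_pos hapos] at hLS'
  have hZle : Z ≤ a ^ (-θ) * ‖g‖ := by
    have h1 : a ^ (-θ) * (Z * a ^ θ) ≤ a ^ (-θ) * ‖g‖ :=
      mul_le_mul_of_nonneg_left hLS' (Real.rpow_nonneg hapos.le _)
    calc Z = a ^ (-θ) * (Z * a ^ θ) := by
            rw [mul_comm Z, ← mul_assoc, ← Real.rpow_add hapos]; simp
      _ ≤ _ := h1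
  have hgn : 0 ≤ ‖g‖ := norm_nonneg _
  have : (1 - θ) * Z * ‖g‖ ≤ (1 - θ) * a ^ (-θ) * ‖g‖ ^ 2 := by
    have := mul_le_mul_of_nonneg_right hZle hgn
    nlinarith
  linarith
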